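/- (Decoder-based / Barber–Agakov lower bound, Eq. (2) first line). For every family q : S → T → ℝ such that for each z ∈ S the function q(z,·) is a strictly positive pmf on T, the mutual information satisfies I(p) ≥ Σ_{(z,y)} p(z,y)·log(q(z,y)) + H(pT). -/
import Mathlib


open Finset

variable {S T : Type*}

/-- Marginal of the joint pmf `p` on the first coordinate: `pS(z) = Σ_y p(z,y)`. -/
noncomputable def margS [Fintype T] (p : S × T → ℝ) (z : S) : ℝ := ∑ y, p (z, y)

/-- Marginal of the joint pmf `p` on the second coordinate: `pT(y) = Σ_z p(z,y)`. -/
noncomputable def margT [Fintype S] (p : S × T → ℝ) (y : T) : ℝ := ∑ z, p (z, y)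

/-- Mutual information `I(p) = Σ_{(z,y)} p(z,y)·log(p(z,y)/(pS(z)·pT(y)))`. -/
noncomputable def mutInfo [Fintype S] [Fintype T] (p : S × T → ℝ) : ℝ :=
  ∑ z, ∑ y, p (z, y) * Real.log (p (z, y) / (margS p z * margT p y))

/-- Entropy of the marginal `pT`: `H(pT) = −Σ_y pT(y)·log pT(y)`. -/
noncomputable def entropyT [Fintype S] [Fintype T] (p : S × T → ℝ) : ℝ :=
  -∑ y, margT p y * Real.log (margT p y)

/-- Kullback–Leibler divergence on a finite type: `KL(u‖v) = Σ_x u(x)·log(u(x)/v(x))`. -/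
noncomputable def klFin {α : Type*} [Fintype α] (u v : α → ℝ) : ℝ :=
  ∑ x, u x * Real.log (u x / v x)

/-- Conditional pmf on `T` given `z`: `p(·|z)(y) = p(z,y)/pS(z)`. -/
noncomputable def condT [Fintype T] (p : S × T → ℝ) (z : S) (y : T) : ℝ :=
  p (z, y) / margS p z

/-- Partition function of a critic `h`: `Z̃(z) = Σ_y pT(y)·exp(h(z,y))`. -/
noncomputable def partFun [Fintype S] [Fintype T] (p : S × T → ℝ) (h : S × T → ℝ) (z : S) : ℝ :=
  ∑ y, margT p y * Real.exp (h (z, y))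

/-- Decoder-based (unnormalized Barber–Agakov) lower bound
`I_DLB = Σ_{(z,y)} p(z,y)·h(z,y) − Σ_z pS(z)·log Z̃(z)`. -/
noncomputable def IDLB [Fintype S] [Fintype T] (p h : S × T → ℝ) : ℝ :=
  (∑ z, ∑ y, p (z, y) * h (z, y)) - ∑ z, margS p z * Real.log (partFun p h z)

/-- Monte Carlo estimator of the partition function from a positive sample `y`
and `K − 1 = n` negatives `ys`: `m(z; y, ys) = (1/K)·(e^{h(z,y)} + Σ_i e^{h(z,ys_i)})`,
with `K = n + 1`. -/
noncomputable def mEst (h : S × T → ℝ) (n : ℕ) (z : S) (y : T) (ys : Fin n → T) : ℝ :=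
  (Real.exp (h (z, y)) + ∑ i, Real.exp (h (z, ys i))) / (n + 1)

/-- InfoNCE bound with `K = n + 1` samples:
`I_NCE(K) = Σ_{(z,y)} Σ_{ys} p(z,y)·ΠpT(ys)·log( e^{h(z,y)} / m(z; y, ys) )`. -/
noncomputable def INCE [Fintype S] [Fintype T] (p h : S × T → ℝ) (n : ℕ) : ℝ :=
  ∑ z, ∑ y, ∑ ys : Fin n → T,
    p (z, y) * (∏ i, margT p (ys i)) *
      Real.log (Real.exp (h (z, y)) / mEst h n z y ys)

/-- Decoder-based / Barber–Agakov lower bound. -/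
theorem decoder_lower_bound [Fintype S] [Fintype T] [Nonempty S] [Nonempty T]
    (p : S × T → ℝ) (hp_pos : ∀ x, 0 < p x) (hp_sum : ∑ x, p x = 1)
    (q : S → T → ℝ) (hq_pos : ∀ z y, 0 < q z y) (hq_sum : ∀ z, ∑ y, q z y = 1) :
    mutInfo p ≥ (∑ z, ∑ y, p (z, y) * Real.log (q z y)) + entropyT p := by
  have hS : ∀ z, 0 < margS p z := fun z =>
    Finset.sum_pos (fun y _ => hp_pos (z, y)) Finset.univ_nonempty
  have hT : ∀ y, 0 < margT p y := fun y =>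
    Finset.sum_pos (fun z _ => hp_pos (z, y)) Finset.univ_nonempty
  -- Gibbs inequality per z
  have key : ∀ z, 0 ≤ ∑ y, p (z, y) * Real.log (p (z, y) / (margS p z * q z y)) := by
    intro z
    have h1 : ∀ y : T, p (z, y) - margS p z * q z y ≤
        p (z, y) * Real.log (p (z, y) / (margS p z * q z y)) := by
      intro y
      have hv : 0 < margS p z * q z y := mul_pos (hS z) (hq_pos z y)
      have hu : 0 < p (z, y) := hp_pos (z, y)
      have := Real.log_le_sub_one_of_pos (show 0 < (margS p z * q z y) / p (z, y) from
        div_pos hv hu)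
      have h2 : p (z, y) * Real.log ((margS p z * q z y) / p (z, y)) ≤
          p (z, y) * ((margS p z * q z y) / p (z, y) - 1) :=
        mul_le_mul_of_nonneg_left this hu.le
      rw [Real.log_div hv.ne' hu.ne'] at h2
      rw [Real.log_div hu.ne' hv.ne']
      have h3 : p (z, y) * ((margS p z * q z y) / p (z, y) - 1) =
          margS p z * q z y - p (z, y) := by field_simp
      nlinarith [h2, h3]
    calc (0:ℝ) = ∑ y, (p (z, y) - margS p z * q z y) := by
          rw [Finset.sum_sub_distrib, ← Finset.mul_sum, hq_sum z, mul_one, margS]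
          ring
      _ ≤ _ := Finset.sum_le_sum (fun y _ => h1 y)
  -- rewrite the difference as the sum of the above
  have hdiff : mutInfo p - ((∑ z, ∑ y, p (z, y) * Real.log (q z y)) + entropyT p)
      = ∑ z, ∑ y, p (z, y) * Real.log (p (z, y) / (margS p z * q z y)) := by
    have hswap : ∑ y, margT p y * Real.log (margT p y)
        = ∑ z, ∑ y, p (z, y) * Real.log (margT p y) := by
      rw [Finset.sum_comm]
      refine Finset.sum_congr rfl fun y _ => ?_
      rw [margT, Finset.sum_mul]
    rw [mutInfo, entropyT, hswap]
    rw [sub_add_eq_sub_sub, sub_neg_eq_add, ← Finset.sum_sub_distrib, ← Finset.sum_add_distrib]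
    refine Finset.sum_congr rfl fun z _ => ?_
    rw [← Finset.sum_sub_distrib, ← Finset.sum_add_distrib]
    refine Finset.sum_congr rfl fun y _ => ?_
    have hu : (0:ℝ) < p (z, y) := hp_pos (z, y)
    rw [Real.log_div hu.ne' (mul_pos (hS z) (hT y)).ne',
        Real.log_div hu.ne' (mul_pos (hS z) (hq_pos z y)).ne',
        Real.log_mul (hS z).ne' (hT y).ne',
        Real.log_mul (hS z).ne' (hq_pos z y).ne']
    ring
  have : 0 ≤ mutInfo p - ((∑ z, ∑ y, p (z, y) * Real.log (q z y)) + entropyT p) := by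
    rw [hdiff]; exact Finset.sum_nonneg fun z _ => key z
  linarith
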